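/- Let μ0 and μ1 be probability measures on a measurable space, and suppose for all measurable sets S: μ0(S) ≤ e^ε μ1(S) + δ and μ1(S) ≤ e^ε μ0(S) + δ, with ε, δ ≥ 0. Then for any probability distributions p0, p1 concentrated on the two points {0,1} (i.e., mixtures), the mixtures ν0 = p0(0)μ0 + p0(1)μ1 and ν1 = p1(0)μ0 + p1(1)μ1 satisfy ν0(S) ≤ e^(2ε) ν1(S) + (1+e^ε)δ for all measurable S. -/

import Mathlib

open MeasureTheory ENNReal

theorem stmt_6 {Ω : Type*} [MeasurableSpace Ω]
    (μ0 μ1 : Measure Ω) [IsProbabilityMeasure μ0] [IsProbabilityMeasure μ1]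
    (ε δ : ℝ) (hε : 0 ≤ ε) (hδ : 0 ≤ δ)
    (h01 : ∀ S : Set Ω, MeasurableSet S →
      μ0 S ≤ ENNReal.ofReal (Real.exp ε) * μ1 S + ENNReal.ofReal δ)
    (h10 : ∀ S : Set Ω, MeasurableSet S →
      μ1 S ≤ ENNReal.ofReal (Real.exp ε) * μ0 S + ENNReal.ofReal δ)
    (p00 p01 p10 p11 : ℝ≥0∞) (hp0 : p00 + p01 = 1) (hp1 : p10 + p11 = 1) :
    ∀ S : Set Ω, MeasurableSet S →
      (p00 • μ0 + p01 • μ1) S ≤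
        ENNReal.ofReal (Real.exp (2 * ε)) * (p10 • μ0 + p11 • μ1) S +
          ENNReal.ofReal ((1 + Real.exp ε) * δ) := by
  intro S hS
  simp only [Measure.coe_add, Measure.coe_smul, Pi.add_apply, Pi.smul_apply, smul_eq_mul]
  set a := μ0 S with ha
  set b := μ1 S with hb
  have hee : ENNReal.ofReal (Real.exp ε) ≤ ENNReal.ofReal (Real.exp (2 * ε)) :=
    ENNReal.ofReal_le_ofReal (Real.exp_le_exp.mpr (by linarith))
  have hdd : ENNReal.ofReal δ ≤ ENNReal.ofReal ((1 + Real.exp ε) * δ) :=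
    ENNReal.ofReal_le_ofReal (by nlinarith [Real.exp_pos ε])
  rcases le_total a b with hab | hab
  · have h1 : p00 * a + p01 * b ≤ b := by
      calc p00 * a + p01 * b ≤ p00 * b + p01 * b :=
            add_le_add_left (mul_le_mul_right hab _) _
        _ = (p00 + p01) * b := (add_mul _ _ _).symm
        _ = b := by rw [hp0, one_mul]
    have h2 : a ≤ p10 * a + p11 * b := by
      calc a = (p10 + p11) * a := by rw [hp1, one_mul]
        _ = p10 * a + p11 * a := add_mul _ _ _
        _ ≤ p10 * a + p11 * b := add_le_add_right (mul_le_mul_right hab _) _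
    calc p00 * a + p01 * b ≤ b := h1
      _ ≤ ENNReal.ofReal (Real.exp ε) * a + ENNReal.ofReal δ := h10 S hS
      _ ≤ ENNReal.ofReal (Real.exp (2 * ε)) * (p10 * a + p11 * b) +
            ENNReal.ofReal ((1 + Real.exp ε) * δ) :=
          add_le_add (mul_le_mul' hee h2) hdd
  · have h1 : p00 * a + p01 * b ≤ a := by
      calc p00 * a + p01 * b ≤ p00 * a + p01 * a :=
            add_le_add_right (mul_le_mul_right hab _) _
        _ = (p00 + p01) * a := (add_mul _ _ _).symm
        _ = a := by rw [hp0, one_mul]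
    have h2 : b ≤ p10 * a + p11 * b := by
      calc b = (p10 + p11) * b := by rw [hp1, one_mul]
        _ = p10 * b + p11 * b := add_mul _ _ _
        _ ≤ p10 * a + p11 * b := add_le_add_left (mul_le_mul_right hab _) _
    calc p00 * a + p01 * b ≤ a := h1
      _ ≤ ENNReal.ofReal (Real.exp ε) * b + ENNReal.ofReal δ := h01 S hS
      _ ≤ ENNReal.ofReal (Real.exp (2 * ε)) * (p10 * a + p11 * b) +
            ENNReal.ofReal ((1 + Real.exp ε) * δ) :=
          add_le_add (mul_le_mul' hee h2) hdd
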